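/- For every T with 0 < T < 1 there exists a function u : ℝ × ℝ → ℝ of class C^∞ that is a classical solution of the one-dimensional wave equation on [0,T]×[−1,1] with Dirichlet boundary conditions, whose initial data are supported in [−1/4,1/4] and do not both vanish identically on [−1,1], and such that u(t,x) = 0 for all t ∈ [0,T] and all x ∈ ω = (−1,−3/4) ∪ (3/4,1). In particular, the threshold T = 1 in the localized observability result is sharp: for T < 1 no observability constant exists even for initial data supported in [−1/4,1/4]. -/

import Mathlib

open MeasureTheory

/-- Partial derivative in time of a function of (time, space). -/
noncomputable def pdt (u : ℝ → ℝ → ℝ) : ℝ → ℝ → ℝ := fun t x => deriv (fun s => u s x) t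

/-- Partial derivative in space of a function of (time, space). -/
noncomputable def pdx (u : ℝ → ℝ → ℝ) : ℝ → ℝ → ℝ := fun t x => deriv (fun y => u t y) x

theorem sharpness_of_localized_threshold (T : ℝ) (hT0 : 0 < T) (hT : T < 1) :
    -- there is an invisible smooth solution with nontrivial initial data
    -- supported in [−1/4, 1/4]
    (∃ u : ℝ → ℝ → ℝ,
      ContDiff ℝ (⊤ : ℕ∞) (Function.uncurry u) ∧
      (∀ t ∈ Set.Icc (0 : ℝ) T, ∀ x ∈ Set.Icc (-1 : ℝ) 1,
        pdt (pdt u) t x = pdx (pdx u) t x) ∧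
      (∀ t ∈ Set.Icc (0 : ℝ) T, u t (-1) = 0 ∧ u t 1 = 0) ∧
      (∀ x : ℝ, 1 / 4 ≤ |x| → |x| ≤ 1 → u 0 x = 0 ∧ pdt u 0 x = 0) ∧
      ¬ (∀ x ∈ Set.Icc (-1 : ℝ) 1, u 0 x = 0 ∧ pdt u 0 x = 0) ∧
      (∀ t ∈ Set.Icc (0 : ℝ) T,
        ∀ x ∈ (Set.Ioo (-1 : ℝ) (-3 / 4) ∪ Set.Ioo (3 / 4 : ℝ) 1), u t x = 0)) ∧
    -- in particular, no observability constant exists even for initial data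
    -- supported in [−1/4, 1/4]
    ¬ (∃ C : ℝ, 0 < C ∧
        ∀ u : ℝ → ℝ → ℝ,
          ContDiffOn ℝ 2 (Function.uncurry u) (Set.Icc 0 T ×ˢ Set.Icc (-1 : ℝ) 1) →
          (∀ t ∈ Set.Icc (0 : ℝ) T, ∀ x ∈ Set.Icc (-1 : ℝ) 1,
            pdt (pdt u) t x = pdx (pdx u) t x) →
          (∀ t ∈ Set.Icc (0 : ℝ) T, u t (-1) = 0 ∧ u t 1 = 0) →
          (∀ x : ℝ, 1 / 4 ≤ |x| → |x| ≤ 1 → u 0 x = 0 ∧ pdt u 0 x = 0) →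
          ∫ x in Set.Ioo (-1 : ℝ) 1, ((pdx u 0 x) ^ 2 + (pdt u 0 x) ^ 2) ≤
            C * ∫ t in Set.Ioo (0 : ℝ) T,
                  ∫ x in (Set.Ioo (-1 : ℝ) (-3 / 4) ∪ Set.Ioo (3 / 4 : ℝ) 1),
                    (pdt u t x) ^ 2) := by
  -- set up a left-moving bump wave u(t,x) = g(x+t), with bump g hugging x = 1/4
  set s : ℝ := (1 - T) / 8 with hs_def
  have hs0 : 0 < s := by simp only [hs_def]; linarith
  have hs8 : s < 1 / 8 := by simp only [hs_def]; linarith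
  set c : ℝ := 1 / 4 - 2 * s with hc_def
  set bump : ContDiffBump c := ⟨s / 2, s, by linarith, by linarith⟩ with hbump_def
  set g : ℝ → ℝ := fun y => bump y with hg_def
  have hgsm : ContDiff ℝ (⊤ : ℕ∞) g := bump.contDiff
  -- vanishing of g and its derivative away from the bump
  have hg0 : ∀ y : ℝ, s ≤ |y - c| → g y = 0 := by
    intro y hy
    exact bump.zero_of_le_dist (by rwa [Real.dist_eq])
  have hder0 : ∀ y : ℝ, s < |y - c| → deriv g y = 0 := by
    intro y hy
    have hopen : IsOpen {z : ℝ | s < |z - c|} := by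
      have : Continuous fun z : ℝ => |z - c| := (continuous_id.sub continuous_const).abs
      exact isOpen_lt continuous_const this
    have hev : g =ᶠ[nhds y] (fun _ => (0 : ℝ)) := by
      filter_upwards [hopen.mem_nhds hy] with z hz
      exact hg0 z (le_of_lt hz)
    rw [hev.deriv_eq, deriv_const]
  set u : ℝ → ℝ → ℝ := fun t x => g (x + t) with hu_def
  -- derivative computations
  have hpdt : ∀ t x : ℝ, pdt u t x = deriv g (x + t) := by
    intro t x
    simp only [pdt, hu_def]
    exact deriv_comp_const_add g x t
  have hpdx : ∀ t x : ℝ, pdx u t x = deriv g (x + t) := by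
    intro t x
    simp only [pdx, hu_def]
    exact deriv_comp_add_const g t x
  have hpdtt : ∀ t x : ℝ, pdt (pdt u) t x = deriv (deriv g) (x + t) := by
    intro t x
    have h1 : (fun s' => pdt u s' x) = fun s' => deriv g (x + s') := funext fun s' => hpdt s' x
    show deriv (fun s' => pdt u s' x) t = _
    rw [h1]
    exact deriv_comp_const_add (deriv g) x t
  have hpdxx : ∀ t x : ℝ, pdx (pdx u) t x = deriv (deriv g) (x + t) := by
    intro t x
    have h1 : (fun y => pdx u t y) = fun y => deriv g (y + t) := funext fun y => hpdx t y
    show deriv (fun y => pdx u t y) x = _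
    rw [h1]
    exact deriv_comp_add_const (deriv g) t x
  have husm : ContDiff ℝ (⊤ : ℕ∞) (Function.uncurry u) := by
    have : Function.uncurry u = fun p : ℝ × ℝ => g (p.2 + p.1) := rfl
    rw [this]
    exact hgsm.comp (contDiff_snd.add contDiff_fst)
  have hwave : ∀ t ∈ Set.Icc (0 : ℝ) T, ∀ x ∈ Set.Icc (-1 : ℝ) 1,
      pdt (pdt u) t x = pdx (pdx u) t x := fun t _ x _ => by rw [hpdtt, hpdxx]
  have hbc : ∀ t ∈ Set.Icc (0 : ℝ) T, u t (-1) = 0 ∧ u t 1 = 0 := by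
    intro t ht
    obtain ⟨ht0, htT⟩ := ht
    constructor
    · apply hg0
      have h1 : -1 + t - c ≤ -s := by simp only [hc_def, hs_def]; linarith
      calc s = -(-s) := by ring
        _ ≤ -(-1 + t - c) := by linarith
        _ ≤ |-1 + t - c| := neg_le_abs _
    · apply hg0
      have h1 : s ≤ 1 + t - c := by simp only [hc_def, hs_def]; linarith
      exact h1.trans (le_abs_self _)
  have hsupp : ∀ x : ℝ, 1 / 4 ≤ |x| → |x| ≤ 1 → u 0 x = 0 ∧ pdt u 0 x = 0 := by
    intro x hx1 hx2
    have hdist : s < |x - c| := by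
      rcases abs_cases x with ⟨h, _⟩ | ⟨h, _⟩
      · -- x ≥ 0, so x ≥ 1/4
        have : s ≤ x - c := by simp only [hc_def]; linarith
        have : s < x - c := by simp only [hc_def]; linarith
        exact this.trans_le (le_abs_self _)
      · -- x ≤ 0, so x ≤ -1/4
        have : s < -(x - c) := by simp only [hc_def, hs_def]; linarith
        exact this.trans_le (neg_le_abs _)
    constructor
    · show g (x + 0) = 0
      rw [add_zero]; exact hg0 x hdist.le
    · rw [hpdt, add_zero]; exact hder0 x hdist
  have hcIcc : c ∈ Set.Icc (-1 : ℝ) 1 := by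
    constructor <;> simp only [hc_def] <;> linarith
  have hgc : g c = 1 := bump.one_of_mem_closedBall (by
    simp [Metric.mem_closedBall, Real.dist_eq]; linarith [bump.rIn_pos])
  have hnontriv : ¬ (∀ x ∈ Set.Icc (-1 : ℝ) 1, u 0 x = 0 ∧ pdt u 0 x = 0) := by
    intro h
    have := (h c hcIcc).1
    rw [hu_def] at this
    simp only at this
    rw [add_zero, hgc] at this
    norm_num at this
  -- invisibility on ω
  have hinvis' : ∀ t : ℝ, 0 ≤ t → t ≤ T →
      ∀ x ∈ (Set.Ioo (-1 : ℝ) (-3 / 4) ∪ Set.Ioo (3 / 4 : ℝ) 1), s < |x + t - c| := by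
    intro t ht0 htT x hx
    rcases hx with ⟨_, hx2⟩ | ⟨hx1, _⟩
    · -- x < -3/4 : x + t < T - 3/4 < c - s
      have : s < -(x + t - c) := by simp only [hc_def, hs_def]; linarith
      exact this.trans_le (neg_le_abs _)
    · -- x > 3/4 : x + t > 3/4 > c + s
      have : s < x + t - c := by simp only [hc_def, hs_def]; linarith
      exact this.trans_le (le_abs_self _)
  have hinvis : ∀ t ∈ Set.Icc (0 : ℝ) T,
      ∀ x ∈ (Set.Ioo (-1 : ℝ) (-3 / 4) ∪ Set.Ioo (3 / 4 : ℝ) 1), u t x = 0 := by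
    intro t ht x hx
    exact hg0 _ (hinvis' t ht.1 ht.2 x hx).le
  refine ⟨⟨u, husm, hwave, hbc, hsupp, hnontriv, hinvis⟩, ?_⟩
  -- second part: no observability constant
  rintro ⟨C, hC, hobs⟩
  have hineq := hobs u ((husm.of_le (WithTop.coe_le_coe.2 le_top)).contDiffOn) hwave hbc hsupp
  -- the right-hand side vanishes
  have hrhs : (∫ t in Set.Ioo (0 : ℝ) T,
      ∫ x in (Set.Ioo (-1 : ℝ) (-3 / 4) ∪ Set.Ioo (3 / 4 : ℝ) 1),
        (pdt u t x) ^ 2) = 0 := by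
    apply setIntegral_eq_zero_of_forall_eq_zero
    intro t ht
    apply setIntegral_eq_zero_of_forall_eq_zero
    intro x hx
    rw [hpdt, hder0 _ (hinvis' t ht.1.le ht.2.le x hx)]
    ring
  rw [hrhs, mul_zero] at hineq
  -- the left-hand side is positive
  have hLHSeq : (∫ x in Set.Ioo (-1 : ℝ) 1, ((pdx u 0 x) ^ 2 + (pdt u 0 x) ^ 2))
      = ∫ x in Set.Ioo (-1 : ℝ) 1, 2 * (deriv g x) ^ 2 := by
    refine integral_congr_ae (Filter.Eventually.of_forall fun x => ?_)
    simp only [hpdx, hpdt, add_zero]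
    ring
  -- there is a point where deriv g ≠ 0, by the mean value theorem
  have hgcs : g (c + s) = 0 := hg0 _ (by rw [add_sub_cancel_left, abs_of_pos hs0])
  obtain ⟨x₁, hx₁mem, hx₁⟩ := exists_deriv_eq_slope g (by linarith : c < c + s)
    (hgsm.continuous.continuousOn) (hgsm.differentiable (by simp)).differentiableOn
  rw [hgcs, hgc, add_sub_cancel_left] at hx₁
  have hx₁ne : deriv g x₁ ≠ 0 := by
    rw [hx₁]
    have : (0 - 1) / s < 0 := by
      apply div_neg_of_neg_of_pos <;> linarith
    linarith
  have hfx₁pos : 0 < 2 * (deriv g x₁) ^ 2 := by positivity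
  have hcont : Continuous fun x : ℝ => 2 * (deriv g x) ^ 2 := by
    have := hgsm.continuous_deriv (WithTop.coe_le_coe.2 le_top)
    fun_prop
  have hpos : 0 < ∫ x in Set.Ioo (-1 : ℝ) 1, 2 * (deriv g x) ^ 2 := by
    rw [setIntegral_pos_iff_support_of_nonneg_ae
      (Filter.Eventually.of_forall fun x => by positivity)
      (hcont.integrableOn_Icc.mono_set Set.Ioo_subset_Icc_self)]
    have hopen : IsOpen (Function.support (fun x : ℝ => 2 * (deriv g x) ^ 2) ∩ Set.Ioo (-1) 1) := by
      apply IsOpen.inter _ isOpen_Ioo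
      exact isOpen_ne_fun hcont continuous_const
    apply hopen.measure_pos volume
    refine ⟨x₁, hfx₁pos.ne', ?_, ?_⟩
    · have := hx₁mem.1; simp only [hc_def] at this ⊢; linarith
    · have := hx₁mem.2; simp only [hc_def, hs_def] at this ⊢; linarith
  rw [hLHSeq] at hineq
  linarith
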